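/- Let a = 0.6526 and let 𝒫 be a uniformly random k-path, with T its last good time (for fixed distinct i, j). For all sufficiently large n and all integers k > n·log n, ℙ(T ≥ k) ≤ e^{−a·k/n}. -/

import Mathlib

/-- One step of the `𝒫`-queue driven by the shuffle `M_{a,b}` with `ab = (a, b)`. -/
def queueStep {n : ℕ} (i j : Fin n) (Q : Finset (Fin n)) (ab : Fin n × Fin n) :
    Finset (Fin n) :=
  if ab.1 = j then {i}
  else if ab.1 = i then {j}
  else if ab.2 ∈ Q then insert ab.1 Q
  else Q.erase ab.1

/-- The `𝒫`-queue at time `t`, for the `k`-path `w` (the shuffle at time `t + 1` is `w t`);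
`Q 0 = ∅`. -/
def queueSeq {n : ℕ} (i j : Fin n) {k : ℕ} (w : Fin k → Fin n × Fin n) : ℕ → Finset (Fin n)
  | 0 => ∅
  | t + 1 => if h : t < k then queueStep i j (queueSeq i j w t) (w ⟨t, h⟩) else queueSeq i j w t

/-- The card moved at time `t ∈ {1, …, k}` by the `k`-path `w` (`none` if `t` is out of
range). -/
def cardMoved {n k : ℕ} (w : Fin k → Fin n × Fin n) (t : ℕ) : Option (Fin n) :=
  if h : 1 ≤ t ∧ t ≤ k then some (w ⟨t - 1, by omega⟩).1 else none

/-- The shuffle at time `t` is an `i`-or-`j` move. -/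
def isIJMove {n : ℕ} (i j : Fin n) {k : ℕ} (w : Fin k → Fin n × Fin n) (t : ℕ) : Prop :=
  cardMoved w t = some i ∨ cardMoved w t = some j

/-- `t` is a good time for the `k`-path `w`: it is an `i`-or-`j` move, and the next
`i`-or-`j` move `t'` (within `{1, …, k}`) has a singleton queue at time `t' - 1` and moves a
different card than the one moved at time `t`. -/
def isGoodTime {n : ℕ} (i j : Fin n) {k : ℕ} (w : Fin k → Fin n × Fin n) (t : ℕ) : Prop :=
  isIJMove i j w t ∧
    ∃ t', t < t' ∧ t' ≤ k ∧ isIJMove i j w t' ∧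
      (∀ s, t < s → s < t' → ¬ isIJMove i j w s) ∧
      (queueSeq i j w (t' - 1)).card = 1 ∧
      cardMoved w t' ≠ cardMoved w t

-- The last good time `T` of the `k`-path `w`, equal to `∞` if there are no good times.
open Classical in
noncomputable def lastGoodTime {n : ℕ} (i j : Fin n) {k : ℕ} (w : Fin k → Fin n × Fin n) :
    ℕ∞ :=
  if ∃ t, isGoodTime i j w t then (Nat.findGreatest (isGoodTime i j w) k : ℕ∞) else ⊤

-- `θ_{i,j}` : interchange the roles of `i` and `j` in every shuffle at a time strictly
-- before the last good time `T` (the shuffle at time `t + 1` is `w t`).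
open Classical in
noncomputable def theta {n : ℕ} (i j : Fin n) {k : ℕ} (w : Fin k → Fin n × Fin n) :
    Fin k → Fin n × Fin n :=
  fun s => if (((s : ℕ) + 1 : ℕ) : ℕ∞) < lastGoodTime i j w
    then (Equiv.swap i j (w s).1, Equiv.swap i j (w s).2)
    else w s

namespace LGT

abbrev St (n : ℕ) := Finset (Fin n) × Option (Fin n) × Bool

def goodNow {n : ℕ} (i j : Fin n) (s : St n) (ab : Fin n × Fin n) : Prop :=
  (ab.1 = i ∨ ab.1 = j) ∧ s.2.1 ≠ none ∧ s.2.1 ≠ some ab.1 ∧ s.1.card = 1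

instance {n : ℕ} (i j : Fin n) (s : St n) (ab : Fin n × Fin n) :
    Decidable (goodNow i j s ab) := by unfold goodNow; infer_instance

def stepSt {n : ℕ} (i j : Fin n) (s : St n) (ab : Fin n × Fin n) : St n :=
  (queueStep i j s.1 ab,
   if ab.1 = i ∨ ab.1 = j then some ab.1 else s.2.1,
   if goodNow i j s ab then true else s.2.2)

def runSeq {n : ℕ} (i j : Fin n) {k : ℕ} (w : Fin k → Fin n × Fin n) : ℕ → St n
  | 0 => (∅, none, false)
  | t + 1 => if h : t < k then stepSt i j (runSeq i j w t) (w ⟨t, h⟩) else runSeq i j w t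

/-- the potential, as a function of the queue cardinality `q` (armed states). -/
def psi : ℕ → ℝ
  | 0 => 1
  | 1 => 1
  | 2 => 1.3473
  | 3 => 1.42855
  | 4 => 1.45763
  | 5 => 1.47039
  | 6 => 1.47682
  | 7 => 1.48047
  | 8 => 1.48283
  | _ + 9 => 1.48463

def wt {n : ℕ} (s : St n) : ℝ :=
  if s.2.2 then 0 else match s.2.1 with
    | none => 1.48463
    | some _ => psi s.1.card

lemma psi_nonneg (q : ℕ) : 0 ≤ psi q := by
  match q with
  | 0 | 1 | 2 | 3 | 4 | 5 | 6 | 7 | 8 => norm_num [psi]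
  | q + 9 => norm_num [psi]

lemma one_le_psi (q : ℕ) : 1 ≤ psi q := by
  match q with
  | 0 | 1 | 2 | 3 | 4 | 5 | 6 | 7 | 8 => norm_num [psi]
  | q + 9 => norm_num [psi]

lemma psi_le_top (q : ℕ) : psi q ≤ 1.48463 := by
  match q with
  | 0 | 1 | 2 | 3 | 4 | 5 | 6 | 7 | 8 => norm_num [psi]
  | q + 9 => norm_num [psi]

lemma psi_of_ge (q : ℕ) (h : 9 ≤ q) : psi q = 1.48463 := by
  obtain ⟨r, rfl⟩ : ∃ r, q = r + 9 := ⟨q - 9, by omega⟩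
  rfl

lemma wt_nonneg {n : ℕ} (s : St n) : 0 ≤ wt s := by
  obtain ⟨Q, last, b⟩ := s
  unfold wt
  cases b <;> cases last <;> simp [psi_nonneg] <;> norm_num

lemma one_le_wt {n : ℕ} (s : St n) (h : s.2.2 = false) : 1 ≤ wt s := by
  obtain ⟨Q, last, b⟩ := s
  simp only at h; subst h
  unfold wt
  cases last <;> simp [one_le_psi] <;> norm_num

lemma wt_le_top {n : ℕ} (s : St n) : wt s ≤ 1.48463 := by
  obtain ⟨Q, last, b⟩ := s
  unfold wt
  cases b <;> cases last <;> simp [psi_le_top] <;> norm_num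

end LGT

namespace LGT
open Finset

variable {n : ℕ}

def Inv (i j : Fin n) (s : St n) : Prop :=
  (s.2.1 = none ∧ s.1 = ∅) ∨
  (s.2.1 = some i ∧ j ∈ s.1 ∧ i ∉ s.1) ∨
  (s.2.1 = some j ∧ i ∈ s.1 ∧ j ∉ s.1)

lemma inv_step {i j : Fin n} (hij : i ≠ j) {s : St n} (hs : Inv i j s)
    (ab : Fin n × Fin n) : Inv i j (stepSt i j s ab) := by
  obtain ⟨Q, last, b⟩ := s
  by_cases hj : ab.1 = j
  · right; right
    refine ⟨by simp [stepSt, hj], ?_, ?_⟩ <;>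
      simp [stepSt, queueStep, hj, hij, Ne.symm hij]
  · by_cases hi : ab.1 = i
    · right; left
      refine ⟨by simp [stepSt, hi], ?_, ?_⟩ <;>
        simp [stepSt, queueStep, hi, hj, hij, Ne.symm hij]
    · have hor : ¬ (ab.1 = i ∨ ab.1 = j) := by tauto
      have hlast : (stepSt i j (Q, last, b) ab).2.1 = last := by simp [stepSt, hor]
      have hQ : (stepSt i j (Q, last, b) ab).1 =
          (if ab.2 ∈ Q then insert ab.1 Q else Q.erase ab.1) := by
        simp [stepSt, queueStep, hi, hj]
      rcases hs with ⟨h1, h2⟩ | ⟨h1, h2, h3⟩ | ⟨h1, h2, h3⟩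
      · left
        simp only at h1 h2; subst h1; subst h2
        refine ⟨hlast, ?_⟩
        rw [hQ]; simp
      · right; left
        simp only at h1 h2 h3; subst h1
        refine ⟨hlast, ?_, ?_⟩
        · rw [hQ]; split
          · exact mem_insert_of_mem h2
          · exact mem_erase.2 ⟨fun hc => hj hc.symm, h2⟩
        · rw [hQ]; split
          · exact fun hm => (mem_insert.1 hm).elim (fun hc => hi hc.symm) h3
          · exact fun hm => h3 (mem_of_mem_erase hm)
      · right; right
        simp only at h1 h2 h3; subst h1
        refine ⟨hlast, ?_, ?_⟩
        · rw [hQ]; split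
          · exact mem_insert_of_mem h2
          · exact mem_erase.2 ⟨fun hc => hi hc.symm, h2⟩
        · rw [hQ]; split
          · exact fun hm => (mem_insert.1 hm).elim (fun hc => hj hc.symm) h3
          · exact fun hm => h3 (mem_of_mem_erase hm)

lemma inv_run {i j : Fin n} (hij : i ≠ j) {k : ℕ} (w : Fin k → Fin n × Fin n) (t : ℕ) :
    Inv i j (runSeq i j w t) := by
  induction t with
  | zero => left; exact ⟨rfl, rfl⟩
  | succ t ih =>
    rw [runSeq]
    split
    · exact inv_step hij ih _
    · exact ih

lemma runSeq_fst {i j : Fin n} {k : ℕ} (w : Fin k → Fin n × Fin n) (t : ℕ) :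
    (runSeq i j w t).1 = queueSeq i j w t := by
  induction t with
  | zero => rfl
  | succ t ih =>
    rw [runSeq, queueSeq]
    split
    · simp [stepSt, ih]
    · exact ih

lemma runSeq_congr {i j : Fin n} {k : ℕ} {w w' : Fin k → Fin n × Fin n} (t : ℕ)
    (h : ∀ s : Fin k, (s : ℕ) < t → w s = w' s) :
    runSeq i j w t = runSeq i j w' t := by
  induction t with
  | zero => rfl
  | succ t ih =>
    have ih' := ih (fun s hs => h s (by omega))
    rw [runSeq, runSeq]
    split
    · rename_i hk
      rw [ih', h ⟨t, hk⟩ (by simp)]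
    · exact ih'

lemma flag_mono {i j : Fin n} {s : St n} (h : s.2.2 = true) (ab : Fin n × Fin n) :
    (stepSt i j s ab).2.2 = true := by
  simp [stepSt, h]

end LGT

namespace LGT
open Finset

variable {n : ℕ}

def Gpair (i j : Fin n) {k : ℕ} (w : Fin k → Fin n × Fin n) (t t' : ℕ) : Prop :=
  isIJMove i j w t ∧ t < t' ∧ t' ≤ k ∧ isIJMove i j w t' ∧
    (∀ s, t < s → s < t' → ¬ isIJMove i j w s) ∧
    (queueSeq i j w (t' - 1)).card = 1 ∧
    cardMoved w t' ≠ cardMoved w t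

def LastAt (i j : Fin n) {k : ℕ} (w : Fin k → Fin n × Fin n) (t : ℕ) (c : Fin n) : Prop :=
  ∃ s, s ≤ t ∧ cardMoved w s = some c ∧ isIJMove i j w s ∧
      ∀ u, s < u → u ≤ t → ¬ isIJMove i j w u

lemma cardMoved_some_le {k : ℕ} {w : Fin k → Fin n × Fin n} {s : ℕ} {c : Fin n}
    (h : cardMoved w s = some c) : 1 ≤ s ∧ s ≤ k := by
  by_contra hc
  unfold cardMoved at h
  rw [dif_neg hc] at h
  exact nomatch h

lemma cardMoved_succ {k : ℕ} (w : Fin k → Fin n × Fin n) (t : ℕ) (h : t < k)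
    (hk : t + 1 ≤ k) : cardMoved w (t + 1) = some (w ⟨t, h⟩).1 := by
  unfold cardMoved
  rw [dif_pos ⟨by omega, hk⟩]
  simp

lemma isIJMove_zero {i j : Fin n} {k : ℕ} (w : Fin k → Fin n × Fin n) :
    ¬ isIJMove i j w 0 := by
  rintro (h | h) <;> exact absurd (cardMoved_some_le h).1 (by omega)

lemma run_char {i j : Fin n} {k : ℕ} (w : Fin k → Fin n × Fin n) :
    ∀ t, t ≤ k →
      ((runSeq i j w t).2.1 = none ↔ ∀ u, u ≤ t → ¬ isIJMove i j w u) ∧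
      (∀ c, ((runSeq i j w t).2.1 = some c ↔ LastAt i j w t c)) ∧
      ((runSeq i j w t).2.2 = true ↔ ∃ t₀ t', t' ≤ t ∧ Gpair i j w t₀ t') := by
  intro t
  induction t with
  | zero =>
    intro _
    refine ⟨?_, ?_, ?_⟩
    · simp only [runSeq, true_iff]
      intro u hu
      interval_cases u
      exact isIJMove_zero w
    · intro c
      simp only [runSeq]
      constructor
      · intro hc; exact nomatch hc
      · rintro ⟨s, hs, hsc, -, -⟩
        interval_cases s
        exact absurd (cardMoved_some_le hsc).1 (by omega)
    · simp only [runSeq]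
      constructor
      · intro hc; exact Bool.noConfusion hc
      · rintro ⟨t₀, t', ht', hG⟩
        exact absurd hG.2.1 (by omega)
  | succ t ih =>
    intro ht
    have h : t < k := by omega
    obtain ⟨IA, IB, IC⟩ := ih (by omega)
    set ab := w ⟨t, h⟩ with hab
    have hcm : cardMoved w (t + 1) = some ab.1 := cardMoved_succ w t h ht
    have hmoveIff : isIJMove i j w (t + 1) ↔ (ab.1 = i ∨ ab.1 = j) := by
      unfold isIJMove
      rw [hcm]
      simp
    have hrun : runSeq i j w (t + 1) = stepSt i j (runSeq i j w t) ab := by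
      rw [runSeq, dif_pos h]
    set R := runSeq i j w t with hR
    by_cases hm : ab.1 = i ∨ ab.1 = j
    · have hlast : (runSeq i j w (t+1)).2.1 = some ab.1 := by
        rw [hrun]; simp [stepSt, hm]
      have hflag : ((runSeq i j w (t+1)).2.2 = true) ↔
          (goodNow i j R ab ∨ R.2.2 = true) := by
        rw [hrun]
        by_cases hg : goodNow i j R ab <;> simp [stepSt, hg]
      refine ⟨?_, ?_, ?_⟩
      · rw [hlast]
        constructor
        · intro hc; exact nomatch hc
        · intro H
          exact absurd (hmoveIff.mpr hm) (H (t+1) le_rfl)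
      · intro c
        rw [hlast]
        constructor
        · intro hc
          have : ab.1 = c := by exact Option.some_injective _ hc
          subst this
          exact ⟨t+1, le_rfl, hcm, hmoveIff.mpr hm, fun u h1 h2 => by omega⟩
        · rintro ⟨s, hs, hsc, hsm, hno⟩
          rcases Nat.lt_or_ge s (t+1) with hlt | hge
          · exact absurd (hmoveIff.mpr hm) (hno (t+1) (by omega) le_rfl)
          · have hseq : s = t + 1 := by omega
            subst hseq
            rw [hcm] at hsc
            exact hsc
      · rw [hflag]
        constructor
        · rintro (hg | hold)
          · obtain ⟨-, hne, hneq, hcard⟩ := hg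
            obtain ⟨c, hlc⟩ := Option.ne_none_iff_exists'.1 hne
            obtain ⟨s, hs, hsc, hsm, hno⟩ := (IB c).1 hlc
            refine ⟨s, t+1, le_rfl, hsm, by omega, ht, hmoveIff.mpr hm,
              fun u h1 h2 => hno u h1 (by omega), ?_, ?_⟩
            · have : t + 1 - 1 = t := by omega
              rw [this, ← runSeq_fst, ← hR, hcard]
            · rw [hcm, hsc]
              intro e
              apply hneq
              rw [hlc]
              exact congrArg some (Option.some_injective _ e).symm
          · obtain ⟨t₀, t', ht', hG⟩ := IC.1 hold
            exact ⟨t₀, t', by omega, hG⟩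
        · rintro ⟨t₀, t', ht', hG⟩
          rcases Nat.lt_or_ge t' (t+1) with hlt | hge
          · exact Or.inr (IC.2 ⟨t₀, t', by omega, hG⟩)
          · have ht'eq : t' = t + 1 := by omega
            subst ht'eq
            obtain ⟨hm0, hlt0, -, -, hno, hcard, hneq⟩ := hG
            have : ∃ c, cardMoved w t₀ = some c := by
              rcases hm0 with h0 | h0
              exacts [⟨i, h0⟩, ⟨j, h0⟩]
            obtain ⟨c, hc⟩ := this
            have hLA : LastAt i j w t c :=
              ⟨t₀, by omega, hc, hm0, fun u h1 h2 => hno u h1 (by omega)⟩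
            have hlc : R.2.1 = some c := (IB c).2 hLA
            left
            refine ⟨hm, by rw [hlc]; simp, ?_, ?_⟩
            · rw [hlc]
              intro e
              apply hneq
              rw [hcm, hc]
              exact congrArg some (Option.some_injective _ e.symm)
            · have : t + 1 - 1 = t := by omega
              rw [this, ← runSeq_fst (i := i) (j := j)] at hcard
              exact hcard
    · have hnm : ¬ isIJMove i j w (t+1) := fun H => hm (hmoveIff.1 H)
      have hlast : (runSeq i j w (t+1)).2.1 = R.2.1 := by
        rw [hrun]; simp [stepSt, hm]
      have hgn : ¬ goodNow i j R ab := fun hg => hm hg.1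
      have hflag : (runSeq i j w (t+1)).2.2 = R.2.2 := by
        rw [hrun]; simp [stepSt, hgn]
      refine ⟨?_, ?_, ?_⟩
      · rw [hlast, IA]
        constructor
        · intro H u hu
          rcases Nat.lt_or_ge u (t+1) with h1 | h1
          · exact H u (by omega)
          · have : u = t + 1 := by omega
            subst this
            exact hnm
        · intro H u hu
          exact H u (by omega)
      · intro c
        rw [hlast, IB c]
        constructor
        · rintro ⟨s, hs, hsc, hsm, hno⟩
          refine ⟨s, by omega, hsc, hsm, fun u h1 h2 => ?_⟩
          rcases Nat.lt_or_ge u (t+1) with hx | hx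
          · exact hno u h1 (by omega)
          · have : u = t + 1 := by omega
            subst this
            exact hnm
        · rintro ⟨s, hs, hsc, hsm, hno⟩
          have hsle : s ≤ t := by
            rcases Nat.lt_or_ge s (t+1) with hx | hx
            · omega
            · have : s = t + 1 := by omega
              subst this
              exact absurd hsm hnm
          exact ⟨s, hsle, hsc, hsm, fun u h1 h2 => hno u h1 (by omega)⟩
      · rw [hflag, IC]
        constructor
        · rintro ⟨t₀, t', ht', hG⟩
          exact ⟨t₀, t', by omega, hG⟩
        · rintro ⟨t₀, t', ht', hG⟩
          refine ⟨t₀, t', ?_, hG⟩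
          rcases Nat.lt_or_ge t' (t+1) with hx | hx
          · omega
          · have : t' = t + 1 := by omega
            subst this
            exact absurd hG.2.2.2.1 hnm

end LGT

namespace LGT
open Finset

variable {n : ℕ}

lemma sum_ite_mem_univ (Q : Finset (Fin n)) (X Y : ℝ) :
    ∑ b : Fin n, (if b ∈ Q then X else Y) = Q.card * X + ((n : ℝ) - Q.card) * Y := by
  rw [Finset.sum_ite, Finset.sum_const, Finset.sum_const]
  have h1 : Finset.univ.filter (fun b => b ∈ Q) = Q := by ext x; simp
  have h2 : Finset.univ.filter (fun b => ¬ b ∈ Q) = Qᶜ := by ext x; simp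
  rw [h1, h2, Finset.card_compl]
  have hle : Q.card ≤ n := by
    simpa using Q.card_le_univ
  rw [Fintype.card_fin]
  rw [nsmul_eq_mul, nsmul_eq_mul, Nat.cast_sub hle]

lemma sum_split_ij {i j : Fin n} (hij : i ≠ j) (g : Fin n → ℝ) :
    ∑ a : Fin n, g a = ∑ a ∈ Finset.univ \ {i, j}, g a + (g i + g j) := by
  rw [← Finset.sum_pair hij]
  exact (Finset.sum_sdiff (Finset.subset_univ _)).symm

lemma card_univ_sdiff_pair {i j : Fin n} (hij : i ≠ j) :
    (Finset.univ \ {i, j} : Finset (Fin n)).card = n - 2 := by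
  rw [Finset.card_sdiff_of_subset (Finset.subset_univ _), Finset.card_pair hij,
    Finset.card_univ, Fintype.card_fin]

end LGT

namespace LGT
open Finset

variable {n : ℕ}

lemma numeric_main (q n : ℕ) (hn : 2000 ≤ n) (hq1 : 1 ≤ q) (hqn : q < n) :
    (n:ℝ) + (n:ℝ) * (if q = 1 then (0:ℝ) else 1)
      + ((q:ℝ) - 1) * ((q:ℝ) * psi q + ((n:ℝ) - q) * psi (q - 1))
      + ((n:ℝ) - q - 1) * ((q:ℝ) * psi (q + 1) + ((n:ℝ) - q) * psi q)
      ≤ ((n:ℝ)^2 - 0.65261 * n) * psi q := by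
  have hn' : (2000 : ℝ) ≤ (n : ℝ) := by exact_mod_cast hn
  have hqR : (q : ℝ) + 1 ≤ (n : ℝ) := by exact_mod_cast hqn
  rcases Nat.lt_or_ge q 9 with hq9 | hq9
  · interval_cases q <;> norm_num [psi] <;> nlinarith [hn', hqR]
  · have e1 : psi q = 1.48463 := psi_of_ge q hq9
    have e2 : psi (q + 1) = 1.48463 := psi_of_ge (q+1) (by omega)
    have e3 : psi (q - 1) ≤ 1.48463 := psi_le_top _
    have e4 : 0 ≤ psi (q - 1) := psi_nonneg _
    have hqR9 : (9 : ℝ) ≤ (q : ℝ) := by exact_mod_cast hq9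
    rw [e1, e2, if_neg (by omega)]
    nlinarith [hn', hqR, hqR9, e3, e4,
      mul_nonneg (mul_nonneg (by linarith : (0:ℝ) ≤ (q:ℝ) - 1)
        (by linarith : (0:ℝ) ≤ (n:ℝ) - q))
        (by linarith : (0:ℝ) ≤ 1.48463 - psi (q - 1))]

lemma unarmed_bound {i j : Fin n} (hij : i ≠ j) (hn : 2000 ≤ n) :
    ∑ ab : Fin n × Fin n, wt (stepSt i j ((∅ : Finset (Fin n)), none, false) ab)
      ≤ ((n:ℝ)^2 - 0.65261 * n) * wt ((∅ : Finset (Fin n)), none, false) := by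
  have hwt : wt ((∅ : Finset (Fin n)), none, false) = 1.48463 := by simp [wt]
  have hpt : ∀ a b : Fin n, wt (stepSt i j ((∅ : Finset (Fin n)), none, false) (a, b)) =
      if a = i ∨ a = j then 1 else (1.48463 : ℝ) := by
    intro a b
    by_cases hj : a = j
    · subst hj
      simp [stepSt, queueStep, goodNow, wt, psi]
    · by_cases hi : a = i
      · subst hi
        simp [stepSt, queueStep, goodNow, wt, hj, psi]
      · have hor : ¬ (a = i ∨ a = j) := by tauto
        simp [stepSt, queueStep, goodNow, wt, hi, hj, hor]
  rw [Fintype.sum_prod_type]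
  have hsum : ∀ a : Fin n, (∑ b : Fin n,
      wt (stepSt i j ((∅ : Finset (Fin n)), none, false) (a, b))) =
      (n : ℝ) * (if a = i ∨ a = j then 1 else (1.48463 : ℝ)) := by
    intro a
    rw [Finset.sum_congr rfl (fun b _ => hpt a b), Finset.sum_const, Finset.card_univ,
      Fintype.card_fin, nsmul_eq_mul]
  rw [Finset.sum_congr rfl (fun a _ => hsum a), ← Finset.mul_sum,
    sum_split_ij hij]
  have hgi : (if i = i ∨ i = j then (1:ℝ) else 1.48463) = 1 := by simp
  have hgj : (if j = i ∨ j = j then (1:ℝ) else 1.48463) = 1 := by simp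
  have hrest : ∑ a ∈ Finset.univ \ {i, j}, (if a = i ∨ a = j then (1:ℝ) else 1.48463)
      = ((n : ℝ) - 2) * 1.48463 := by
    have hconst : ∀ a ∈ Finset.univ \ {i, j},
        (if a = i ∨ a = j then (1:ℝ) else 1.48463) = 1.48463 := by
      intro a ha
      rw [if_neg]
      simp only [Finset.mem_sdiff, Finset.mem_insert, Finset.mem_singleton] at ha
      tauto
    rw [Finset.sum_congr rfl hconst, Finset.sum_const, card_univ_sdiff_pair hij,
      nsmul_eq_mul, Nat.cast_sub (by omega)]
    norm_num
  rw [hrest, hgi, hgj, hwt]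
  have hn' : (2000 : ℝ) ≤ (n : ℝ) := by exact_mod_cast hn
  nlinarith [hn']

lemma armed_bound {i j : Fin n} (hij : i ≠ j) (hn : 2000 ≤ n) {Q : Finset (Fin n)}
    {c x : Fin n} (hcx : (c = i ∧ x = j) ∨ (c = j ∧ x = i))
    (hxQ : x ∈ Q) (hcQ : c ∉ Q) :
    ∑ ab : Fin n × Fin n, wt (stepSt i j (Q, some c, false) ab)
      ≤ ((n:ℝ)^2 - 0.65261 * n) * wt (Q, some c, false) := by
  have hcxne : c ≠ x := by rcases hcx with ⟨rfl, rfl⟩ | ⟨rfl, rfl⟩; exacts [hij, Ne.symm hij]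
  have hwt : wt (Q, some c, false) = psi Q.card := by simp [wt]
  have hstep_c : ∀ b : Fin n, wt (stepSt i j (Q, some c, false) (c, b)) = 1 := by
    intro b
    rcases hcx with ⟨rfl, rfl⟩ | ⟨rfl, rfl⟩ <;>
      simp [stepSt, queueStep, goodNow, wt, hij, Ne.symm hij, psi]
  have hstep_x : ∀ b : Fin n, wt (stepSt i j (Q, some c, false) (x, b)) =
      (if Q.card = 1 then (0:ℝ) else 1) := by
    intro b
    by_cases hq : Q.card = 1 <;>
      rcases hcx with ⟨rfl, rfl⟩ | ⟨rfl, rfl⟩ <;>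
        simp [stepSt, queueStep, goodNow, wt, hij, Ne.symm hij, hq, psi]
  have hstep_o : ∀ a b : Fin n, a ≠ i → a ≠ j →
      wt (stepSt i j (Q, some c, false) (a, b)) =
      (if b ∈ Q then psi (insert a Q).card else psi ((Q.erase a).card)) := by
    intro a b hi hj
    have hor : ¬ (a = i ∨ a = j) := by tauto
    by_cases hb : b ∈ Q <;>
      simp [stepSt, queueStep, goodNow, wt, hi, hj, hor, hb]
  have hq1 : 1 ≤ Q.card := Finset.card_pos.2 ⟨x, hxQ⟩
  have hqn : Q.card < n := by
    have hss : Q ⊂ Finset.univ := Finset.ssubset_univ_iff.mpr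
      (fun h => hcQ (h.symm ▸ Finset.mem_univ c))
    have := Finset.card_lt_card hss
    rwa [Finset.card_univ, Fintype.card_fin] at this
  rw [Fintype.sum_prod_type,
    sum_split_ij hij (fun a => ∑ b, wt (stepSt i j (Q, some c, false) (a, b)))]
  have hgc : ∑ b : Fin n, wt (stepSt i j (Q, some c, false) (c, b)) = (n : ℝ) := by
    rw [Finset.sum_congr rfl (fun b _ => hstep_c b), Finset.sum_const, Finset.card_univ,
      Fintype.card_fin, nsmul_eq_mul, mul_one]
  have hgx : ∑ b : Fin n, wt (stepSt i j (Q, some c, false) (x, b)) =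
      (n : ℝ) * (if Q.card = 1 then (0:ℝ) else 1) := by
    rw [Finset.sum_congr rfl (fun b _ => hstep_x b), Finset.sum_const, Finset.card_univ,
      Fintype.card_fin, nsmul_eq_mul]
  have hgij : (∑ b : Fin n, wt (stepSt i j (Q, some c, false) (i, b))) +
      (∑ b : Fin n, wt (stepSt i j (Q, some c, false) (j, b))) =
      (n : ℝ) + (n : ℝ) * (if Q.card = 1 then (0:ℝ) else 1) := by
    rcases hcx with ⟨rfl, rfl⟩ | ⟨rfl, rfl⟩
    · rw [hgc, hgx]
    · rw [hgx, hgc]; ring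
  have hVin : ∀ a : Fin n, a ≠ i → a ≠ j → a ∈ Q →
      ∑ b : Fin n, wt (stepSt i j (Q, some c, false) (a, b)) =
      ((Q.card : ℝ)) * psi Q.card + ((n : ℝ) - Q.card) * psi (Q.card - 1) := by
    intro a hi hj haQ
    rw [Finset.sum_congr rfl (fun b _ => hstep_o a b hi hj)]
    rw [Finset.insert_eq_self.mpr haQ, Finset.card_erase_of_mem haQ]
    exact sum_ite_mem_univ Q _ _
  have hVout : ∀ a : Fin n, a ≠ i → a ≠ j → a ∉ Q →
      ∑ b : Fin n, wt (stepSt i j (Q, some c, false) (a, b)) =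
      ((Q.card : ℝ)) * psi (Q.card + 1) + ((n : ℝ) - Q.card) * psi Q.card := by
    intro a hi hj haQ
    rw [Finset.sum_congr rfl (fun b _ => hstep_o a b hi hj)]
    rw [Finset.card_insert_of_notMem haQ, Finset.erase_eq_of_notMem haQ]
    exact sum_ite_mem_univ Q _ _
  have hsplit : ∑ a ∈ Finset.univ \ {i, j},
      (∑ b : Fin n, wt (stepSt i j (Q, some c, false) (a, b)))
      = ∑ a ∈ Finset.univ \ {i, j}, (if a ∈ Q then
          ((Q.card : ℝ) * psi Q.card + ((n : ℝ) - Q.card) * psi (Q.card - 1))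
        else ((Q.card : ℝ) * psi (Q.card + 1) + ((n : ℝ) - Q.card) * psi Q.card)) := by
    refine Finset.sum_congr rfl (fun a ha => ?_)
    simp only [Finset.mem_sdiff, Finset.mem_insert, Finset.mem_singleton] at ha
    have hi : a ≠ i := fun h => ha.2 (Or.inl h)
    have hj : a ≠ j := fun h => ha.2 (Or.inr h)
    by_cases haQ : a ∈ Q
    · rw [if_pos haQ, hVin a hi hj haQ]
    · rw [if_neg haQ, hVout a hi hj haQ]
  have hfilter1 : (Finset.univ \ {i, j}).filter (fun a => a ∈ Q) = Q.erase x := by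
    ext a
    simp only [Finset.mem_filter, Finset.mem_sdiff, Finset.mem_insert, Finset.mem_singleton,
      Finset.mem_erase, Finset.mem_univ, true_and]
    constructor
    · rintro ⟨hnij, haQ⟩
      refine ⟨?_, haQ⟩
      rcases hcx with ⟨rfl, rfl⟩ | ⟨rfl, rfl⟩ <;> tauto
    · rintro ⟨hax, haQ⟩
      have hac : a ≠ c := fun h => hcQ (h ▸ haQ)
      refine ⟨?_, haQ⟩
      rcases hcx with ⟨rfl, rfl⟩ | ⟨rfl, rfl⟩ <;> tauto
  have hcard1 : ((Finset.univ \ {i, j}).filter (fun a => a ∈ Q)).card = Q.card - 1 := by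
    rw [hfilter1, Finset.card_erase_of_mem hxQ]
  have hcard2 : ((Finset.univ \ {i, j}).filter (fun a => ¬ a ∈ Q)).card = n - Q.card - 1 := by
    have htot := Finset.card_filter_add_card_filter_not
      (s := Finset.univ \ {i, j}) (p := fun a => a ∈ Q)
    rw [card_univ_sdiff_pair hij, hcard1] at htot
    omega
  rw [hsplit, Finset.sum_ite, Finset.sum_const, Finset.sum_const, hcard1, hcard2,
    nsmul_eq_mul, nsmul_eq_mul, hgij, hwt]
  have hc1 : ((Q.card - 1 : ℕ) : ℝ) = (Q.card : ℝ) - 1 := by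
    rw [Nat.cast_sub hq1]; norm_num
  have hc2 : ((n - Q.card - 1 : ℕ) : ℝ) = (n : ℝ) - Q.card - 1 := by
    rw [Nat.cast_sub (by omega), Nat.cast_sub (by omega)]; norm_num
  rw [hc1, hc2]
  have := numeric_main Q.card n hn hq1 hqn
  linarith

end LGT

namespace LGT
open Finset

variable {n : ℕ}

lemma wt_flag_true {s : St n} (h : s.2.2 = true) : wt s = 0 := by simp [wt, h]

lemma step_bound {i j : Fin n} (hij : i ≠ j) (hn : 2000 ≤ n) (s : St n) (hs : Inv i j s) :
    ∑ ab : Fin n × Fin n, wt (stepSt i j s ab)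
      ≤ ((n:ℝ)^2 - 0.65261 * n) * wt s := by
  obtain ⟨Q, last, b⟩ := s
  cases b with
  | true =>
    have h0 : ∀ ab : Fin n × Fin n, wt (stepSt i j (Q, last, true) ab) = 0 :=
      fun ab => wt_flag_true (flag_mono rfl ab)
    rw [Finset.sum_congr rfl (fun ab _ => h0 ab), wt_flag_true rfl]
    simp
  | false =>
    rcases hs with ⟨h1, h2⟩ | ⟨h1, h2, h3⟩ | ⟨h1, h2, h3⟩
    · have h1' : last = none := h1
      have h2' : Q = ∅ := h2
      subst h1'; subst h2'
      exact unarmed_bound hij hn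
    · have h1' : last = some i := h1
      subst h1'
      exact armed_bound hij hn (Or.inl ⟨rfl, rfl⟩) h2 h3
    · have h1' : last = some j := h1
      subst h1'
      exact armed_bound hij hn (Or.inr ⟨rfl, rfl⟩) h2 h3

lemma sum_step_all {i j : Fin n} (hij : i ≠ j) (hn : 2000 ≤ n) {k : ℕ}
    (t : ℕ) (ht : t < k) :
    ((n:ℝ)^2) * (∑ w : Fin k → Fin n × Fin n, wt (runSeq i j w (t+1)))
      ≤ ((n:ℝ)^2 - 0.65261 * n) * (∑ w : Fin k → Fin n × Fin n, wt (runSeq i j w t)) := by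
  classical
  have hn0 : 0 < n := by omega
  set t₀ : Fin k := ⟨t, ht⟩ with ht₀
  set e := Equiv.funSplitAt t₀ (Fin n × Fin n) with he
  set x₀ : Fin n × Fin n := (⟨0, hn0⟩, ⟨0, hn0⟩) with hx₀
  have hne : ∀ (x : Fin n × Fin n) (g : { s : Fin k // s ≠ t₀ } → Fin n × Fin n)
      (s : Fin k) (hs : s ≠ t₀), e.symm (x, g) s = g ⟨s, hs⟩ := by
    intro x g s hs
    simp [he, Equiv.funSplitAt, Equiv.piSplitAt, hs]
  have hat : ∀ (x : Fin n × Fin n) (g : { s : Fin k // s ≠ t₀ } → Fin n × Fin n),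
      e.symm (x, g) t₀ = x := by
    intro x g
    simp [he, Equiv.funSplitAt, Equiv.piSplitAt]
  have hS : ∀ (x : Fin n × Fin n) (g : { s : Fin k // s ≠ t₀ } → Fin n × Fin n),
      runSeq i j (e.symm (x, g)) t = runSeq i j (e.symm (x₀, g)) t := by
    intro x g
    apply runSeq_congr
    intro s hs
    have hsne : s ≠ t₀ := by
      intro hc
      rw [hc] at hs
      exact lt_irrefl t hs
    rw [hne x g s hsne, hne x₀ g s hsne]
  have hrw1 : ∑ w : Fin k → Fin n × Fin n, wt (runSeq i j w (t+1))
      = ∑ g : { s : Fin k // s ≠ t₀ } → Fin n × Fin n, ∑ x : Fin n × Fin n,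
          wt (stepSt i j (runSeq i j (e.symm (x₀, g)) t) x) := by
    rw [← Equiv.sum_comp e.symm (fun w => wt (runSeq i j w (t+1))),
      Fintype.sum_prod_type_right]
    refine Finset.sum_congr rfl (fun g _ => Finset.sum_congr rfl (fun x _ => ?_))
    have hstep : runSeq i j (e.symm (x, g)) (t+1)
        = stepSt i j (runSeq i j (e.symm (x, g)) t) (e.symm (x, g) t₀) := by
      rw [runSeq, dif_pos ht]
    rw [hstep, hS x g, hat x g]
  have hrw2 : ∑ w : Fin k → Fin n × Fin n, wt (runSeq i j w t)
      = ((n:ℝ)^2) * ∑ g : { s : Fin k // s ≠ t₀ } → Fin n × Fin n,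
          wt (runSeq i j (e.symm (x₀, g)) t) := by
    rw [← Equiv.sum_comp e.symm (fun w => wt (runSeq i j w t)),
      Fintype.sum_prod_type_right]
    have hgx : ∀ g : { s : Fin k // s ≠ t₀ } → Fin n × Fin n,
        (∑ x : Fin n × Fin n, wt (runSeq i j (e.symm (x, g)) t))
        = ((n:ℝ)^2) * wt (runSeq i j (e.symm (x₀, g)) t) := by
      intro g
      rw [Finset.sum_congr rfl (fun x _ => congrArg wt (hS x g)), Finset.sum_const,
        Finset.card_univ, Fintype.card_prod, Fintype.card_fin, nsmul_eq_mul]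
      push_cast
      ring
    rw [Finset.sum_congr rfl (fun g _ => hgx g), ← Finset.mul_sum]
  rw [hrw1, hrw2]
  have hinner : ∑ g : { s : Fin k // s ≠ t₀ } → Fin n × Fin n,
      (∑ x : Fin n × Fin n, wt (stepSt i j (runSeq i j (e.symm (x₀, g)) t) x))
      ≤ ∑ g : { s : Fin k // s ≠ t₀ } → Fin n × Fin n,
          ((n:ℝ)^2 - 0.65261 * n) * wt (runSeq i j (e.symm (x₀, g)) t) :=
    Finset.sum_le_sum (fun g _ => step_bound hij hn _ (inv_run hij _ t))
  have hsq : (0:ℝ) ≤ (n:ℝ)^2 := by positivity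
  calc ((n:ℝ)^2) * ∑ g : { s : Fin k // s ≠ t₀ } → Fin n × Fin n,
        (∑ x : Fin n × Fin n, wt (stepSt i j (runSeq i j (e.symm (x₀, g)) t) x))
      ≤ ((n:ℝ)^2) * ∑ g : { s : Fin k // s ≠ t₀ } → Fin n × Fin n,
          ((n:ℝ)^2 - 0.65261 * n) * wt (runSeq i j (e.symm (x₀, g)) t) :=
        mul_le_mul_of_nonneg_left hinner hsq
    _ = ((n:ℝ)^2 - 0.65261 * n) * (((n:ℝ)^2) * ∑ g : { s : Fin k // s ≠ t₀ } → Fin n × Fin n,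
          wt (runSeq i j (e.symm (x₀, g)) t)) := by
        rw [← Finset.mul_sum]
        ring

end LGT

namespace LGT
open Finset

variable {n : ℕ}

lemma A_decay {i j : Fin n} (hij : i ≠ j) (hn : 2000 ≤ n) {k : ℕ} :
    ∀ t, t ≤ k →
      (∑ w : Fin k → Fin n × Fin n, wt (runSeq i j w t))
        ≤ 1.48463 * ((n:ℝ)^2 - 0.65261 * n)^t * ((n:ℝ)^2)^(k - t) := by
  have hnR : (2000:ℝ) ≤ (n:ℝ) := by exact_mod_cast hn
  intro t
  induction t with
  | zero =>
    intro _
    have : ∀ w : Fin k → Fin n × Fin n, wt (runSeq i j w 0) = 1.48463 := by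
      intro w
      simp [runSeq, wt]
    rw [Finset.sum_congr rfl (fun w _ => this w), Finset.sum_const, Finset.card_univ,
      Fintype.card_fun, Fintype.card_prod, Fintype.card_fin, Fintype.card_fin,
      nsmul_eq_mul]
    refine le_of_eq ?_
    rw [pow_zero, Nat.sub_zero, mul_one]
    push_cast
    ring
  | succ t ih =>
    intro ht
    have htk : t < k := by omega
    have hpos : (0:ℝ) < (n:ℝ)^2 := by positivity
    have hstep := sum_step_all hij hn t htk
    have hIH := ih (by omega)
    have hcoef : (0:ℝ) ≤ (n:ℝ)^2 - 0.65261 * n := by nlinarith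
    have key : ((n:ℝ)^2) * (∑ w : Fin k → Fin n × Fin n, wt (runSeq i j w (t+1)))
        ≤ ((n:ℝ)^2) * (1.48463 * ((n:ℝ)^2 - 0.65261 * n)^(t+1) * ((n:ℝ)^2)^(k - (t+1))) := by
      calc ((n:ℝ)^2) * (∑ w : Fin k → Fin n × Fin n, wt (runSeq i j w (t+1)))
          ≤ ((n:ℝ)^2 - 0.65261 * n) * (∑ w : Fin k → Fin n × Fin n, wt (runSeq i j w t)) :=
            hstep
        _ ≤ ((n:ℝ)^2 - 0.65261 * n) *
              (1.48463 * ((n:ℝ)^2 - 0.65261 * n)^t * ((n:ℝ)^2)^(k - t)) :=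
            mul_le_mul_of_nonneg_left hIH hcoef
        _ = ((n:ℝ)^2) * (1.48463 * ((n:ℝ)^2 - 0.65261 * n)^(t+1) * ((n:ℝ)^2)^(k - (t+1))) := by
            rw [show k - t = (k - (t+1)) + 1 by omega, pow_succ, pow_succ]
            ring
    exact le_of_mul_le_mul_left key hpos

lemma card_le_A {i j : Fin n} {k : ℕ} :
    ((Finset.univ.filter
        (fun w : Fin k → Fin n × Fin n => (runSeq i j w k).2.2 = false)).card : ℝ)
      ≤ ∑ w : Fin k → Fin n × Fin n, wt (runSeq i j w k) := by
  classical
  calc ((Finset.univ.filter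
        (fun w : Fin k → Fin n × Fin n => (runSeq i j w k).2.2 = false)).card : ℝ)
      = ∑ w ∈ Finset.univ.filter
          (fun w : Fin k → Fin n × Fin n => (runSeq i j w k).2.2 = false), (1:ℝ) := by
        rw [Finset.sum_const, nsmul_eq_mul, mul_one]
    _ ≤ ∑ w ∈ Finset.univ.filter
          (fun w : Fin k → Fin n × Fin n => (runSeq i j w k).2.2 = false),
            wt (runSeq i j w k) := by
        refine Finset.sum_le_sum (fun w hw => ?_)
        rw [Finset.mem_filter] at hw
        exact one_le_wt _ hw.2
    _ ≤ ∑ w : Fin k → Fin n × Fin n, wt (runSeq i j w k) :=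
        Finset.sum_le_sum_of_subset_of_nonneg (Finset.filter_subset _ _)
          (fun w _ _ => wt_nonneg _)

lemma isGoodTime_ne_k {i j : Fin n} {k : ℕ} {w : Fin k → Fin n × Fin n} :
    ¬ isGoodTime i j w k := by
  rintro ⟨-, t', h1, h2, -⟩
  omega

lemma flag_false_iff {i j : Fin n} {k : ℕ} (w : Fin k → Fin n × Fin n) :
    (runSeq i j w k).2.2 = false ↔ ∀ t, ¬ isGoodTime i j w t := by
  have hchar := (run_char (i := i) (j := j) w k le_rfl).2.2
  constructor
  · intro hf t hgood
    obtain ⟨hmv, t', h1, h2, h3, h4, h5, h6⟩ := hgood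
    have : (runSeq i j w k).2.2 = true :=
      hchar.2 ⟨t, t', h2, hmv, h1, h2, h3, h4, h5, h6⟩
    rw [hf] at this
    exact Bool.noConfusion this
  · intro hno
    by_contra hf
    have htrue : (runSeq i j w k).2.2 = true := by
      cases hx : (runSeq i j w k).2.2
      · exact absurd hx hf
      · rfl
    obtain ⟨t₀, t', ht', hG⟩ := hchar.1 htrue
    obtain ⟨g1, g2, g3, g4, g5, g6, g7⟩ := hG
    exact hno t₀ ⟨g1, t', g2, g3, g4, g5, g6, g7⟩

lemma lastGoodTime_ge_iff {i j : Fin n} {k : ℕ} (hk : 1 ≤ k) (w : Fin k → Fin n × Fin n) :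
    ((k : ℕ∞) ≤ lastGoodTime i j w) ↔ ∀ t, ¬ isGoodTime i j w t := by
  classical
  unfold lastGoodTime
  split
  · rename_i hex
    constructor
    · intro hle
      exfalso
      have hle' : k ≤ Nat.findGreatest (isGoodTime i j w) k := by exact_mod_cast hle
      have hge : Nat.findGreatest (isGoodTime i j w) k ≤ k := Nat.findGreatest_le k
      have heq : Nat.findGreatest (isGoodTime i j w) k = k := le_antisymm hge hle'
      have := (Nat.findGreatest_eq_iff.mp heq).2.1 (by omega)
      exact isGoodTime_ne_k this
    · intro hno
      exact absurd hex (by push_neg; exact fun t => hno t)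
  · rename_i hex
    simp only [le_top, true_iff]
    push_neg at hex
    exact hex

end LGT

/-- With `a = 0.6526` : for all sufficiently large `n` and all integers `k > n log n`, the
last good time `T` of a uniformly random `k`-path satisfies `ℙ(T ≥ k) ≤ e^{-a k / n}`. -/
theorem last_good_time_tail_bound :
    ∃ N : ℕ, ∀ n : ℕ, N ≤ n → ∀ i j : Fin n, i ≠ j →
      ∀ k : ℕ, (n : ℝ) * Real.log n < (k : ℝ) →
        (Nat.card {w : Fin k → Fin n × Fin n // (k : ℕ∞) ≤ lastGoodTime i j w} : ℝ) /
            ((n : ℝ) ^ 2) ^ k ≤ Real.exp (-(0.6526 * (k : ℝ) / (n : ℝ))) := by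
  classical
  refine ⟨max 2000 (⌈Real.exp 50000⌉₊ + 1), ?_⟩
  intro n hN i j hij k hk
  have hn2000 : 2000 ≤ n := le_trans (le_max_left _ _) hN
  have hnR : (2000:ℝ) ≤ (n:ℝ) := by exact_mod_cast hn2000
  have hn0 : (0:ℝ) < n := by linarith
  have hexp : Real.exp 50000 ≤ (n:ℝ) := by
    have h1 : (⌈Real.exp 50000⌉₊ + 1 : ℕ) ≤ n := le_trans (le_max_right _ _) hN
    calc Real.exp 50000 ≤ (⌈Real.exp 50000⌉₊ : ℝ) := Nat.le_ceil _
      _ ≤ ((⌈Real.exp 50000⌉₊ + 1 : ℕ) : ℝ) := by push_cast; linarith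
      _ ≤ (n:ℝ) := by exact_mod_cast h1
  have hlog : (50000:ℝ) ≤ Real.log n := by
    rw [Real.le_log_iff_exp_le hn0]
    exact hexp
  have hkpos : (0:ℝ) < (k:ℝ) := by
    refine lt_trans ?_ hk
    positivity
  have hk1 : 1 ≤ k := by
    by_contra hc
    push_neg at hc
    interval_cases k
    simp at hkpos
  have hPiff : ∀ w : Fin k → Fin n × Fin n,
      ((k:ℕ∞) ≤ lastGoodTime i j w) ↔ ((LGT.runSeq i j w k).2.2 = false) := by
    intro w
    rw [LGT.lastGoodTime_ge_iff hk1 w, ← LGT.flag_false_iff w]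
  have hcard : (Nat.card {w : Fin k → Fin n × Fin n // (k : ℕ∞) ≤ lastGoodTime i j w}) =
      (Finset.univ.filter (fun w : Fin k → Fin n × Fin n =>
        (LGT.runSeq i j w k).2.2 = false)).card := by
    rw [Nat.card_eq_fintype_card, Fintype.card_subtype]
    exact congrArg Finset.card (Finset.filter_congr (fun w _ => by rw [hPiff w]))
  have hA := LGT.A_decay hij hn2000 (k := k) k le_rfl
  rw [Nat.sub_self, pow_zero, mul_one] at hA
  have hbound : ((Nat.card {w : Fin k → Fin n × Fin n // (k : ℕ∞) ≤ lastGoodTime i j w}) : ℝ)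
      ≤ 1.48463 * ((n:ℝ)^2 - 0.65261 * n)^k := by
    rw [hcard]
    exact le_trans LGT.card_le_A hA
  rw [div_le_iff₀ (by positivity : (0:ℝ) < ((n:ℝ)^2)^k)]
  refine le_trans hbound ?_
  have hsplit : ((n:ℝ)^2 - 0.65261 * n)^k = ((1 - 0.65261/(n:ℝ))^k) * ((n:ℝ)^2)^k := by
    rw [← mul_pow]
    congr 1
    field_simp
  have h1n : (0:ℝ) ≤ 1 - 0.65261/(n:ℝ) := by
    rw [sub_nonneg, div_le_one hn0]
    linarith
  have hle1 : (1 - 0.65261/(n:ℝ)) ≤ Real.exp (-(0.65261/(n:ℝ))) := by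
    have := Real.add_one_le_exp (-(0.65261/(n:ℝ)))
    linarith
  have hpowle : (1 - 0.65261/(n:ℝ))^k ≤ Real.exp (-(0.65261/(n:ℝ)))^k :=
    pow_le_pow_left₀ h1n hle1 k
  have hexpk : Real.exp (-(0.65261/(n:ℝ)))^k = Real.exp ((k:ℝ) * (-(0.65261/(n:ℝ)))) := by
    rw [← Real.exp_nat_mul]
  have hT : (1.48463:ℝ) ≤ Real.exp (0.00001 * (k:ℝ) / (n:ℝ)) := by
    have hkn : Real.log n ≤ (k:ℝ) / n := by
      rw [le_div_iff₀ hn0]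
      nlinarith [hk]
    have h05 : (0.5:ℝ) ≤ 0.00001 * (k:ℝ) / n := by
      rw [mul_div_assoc]
      nlinarith [hkn, hlog]
    calc (1.48463:ℝ) ≤ Real.exp 0.5 := by
          have h25 := Real.add_one_le_exp (0.25:ℝ)
          have hsq : Real.exp 0.5 = Real.exp 0.25 * Real.exp 0.25 := by
            rw [← Real.exp_add]
            norm_num
          nlinarith [h25]
      _ ≤ Real.exp (0.00001 * (k:ℝ) / n) := Real.exp_le_exp.mpr h05
  have hnegs : Real.exp (0.00001 * (k:ℝ) / (n:ℝ)) * Real.exp ((k:ℝ) * (-(0.65261/(n:ℝ))))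
      = Real.exp (-(0.6526 * (k:ℝ) / (n:ℝ))) := by
    rw [← Real.exp_add]
    congr 1
    field_simp
    ring
  calc 1.48463 * ((n:ℝ)^2 - 0.65261 * n)^k
      = (1.48463 * (1 - 0.65261/(n:ℝ))^k) * ((n:ℝ)^2)^k := by rw [hsplit]; ring
    _ ≤ (1.48463 * Real.exp ((k:ℝ) * (-(0.65261/(n:ℝ))))) * ((n:ℝ)^2)^k := by
        have hstep : 1.48463 * (1 - 0.65261/(n:ℝ))^k
            ≤ 1.48463 * Real.exp ((k:ℝ) * (-(0.65261/(n:ℝ)))) := by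
          rw [← hexpk]
          nlinarith [hpowle]
        exact mul_le_mul_of_nonneg_right hstep (by positivity)
    _ ≤ Real.exp (-(0.6526 * (k:ℝ) / (n:ℝ))) * ((n:ℝ)^2)^k := by
        refine mul_le_mul_of_nonneg_right ?_ (by positivity)
        rw [← hnegs]
        exact mul_le_mul_of_nonneg_right hT (Real.exp_pos _).le
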